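/- Let d ≥ 1 and consider the one-factor binary model with parameters ordered so that β_1 ≤ β_2 ≤ … ≤ β_d; set β_0 := 0 and β_{d+1} := 1. Then for every x = (x_1,…,x_d) ∈ {0,1}^d, the joint pmf has the closed form ∫₀¹ ∏_{j=1}^d p_j(u)^{x_j}(1−p_j(u))^{1−x_j} du = Σ_{j=0}^{d} (β_{j+1} − β_j) · f(j), where f(j₀) := ∏_{j=1}^{j₀} ν_j^{x_j}(1−ν_j)^{1−x_j} · ∏_{j=j₀+1}^{d} λ_j^{x_j}(1−λ_j)^{1−x_j} (empty products being 1). -/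

import Mathlib

open MeasureTheory

lemma step_piece {a b c : ℝ} (hab : a ≤ b) (g : ℝ → ℝ)
    (h : ∀ u ∈ Set.Ioo a b, g u = c) :
    IntervalIntegrable g volume a b ∧ ∫ u in a..b, g u = (b - a) * c := by
  have hrestr : volume.restrict (Set.Ioc a b) = volume.restrict (Set.Ioo a b) :=
    (Measure.restrict_congr_set Ioo_ae_eq_Ioc).symm
  have hae : g =ᵐ[volume.restrict (Set.Ioc a b)] (fun _ => c) := by
    rw [hrestr]
    exact (ae_restrict_iff' measurableSet_Ioo).2 (Filter.Eventually.of_forall h)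
  constructor
  · rw [intervalIntegrable_iff_integrableOn_Ioc_of_le hab]
    exact (integrableOn_const measure_Ioc_lt_top.ne).congr hae.symm
  · rw [intervalIntegral.integral_of_le hab]
    calc ∫ u in Set.Ioc a b, g u = ∫ _u in Set.Ioc a b, c := integral_congr_ae hae
    _ = (b - a) * c := by
        simp [Real.volume_Ioc, ENNReal.toReal_ofReal (sub_nonneg.2 hab), smul_eq_mul, hab]

theorem explicit_distribution (d : ℕ) (hd : 1 ≤ d)
    (α ε δ β lam ν : ℕ → ℝ)
    (hα : ∀ j ∈ Finset.Icc 1 d, α j ∈ Set.Ioo (0:ℝ) 1)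
    (hε : ∀ j ∈ Finset.Icc 1 d, ε j ∈ Set.Ioo (0:ℝ) 1)
    (hδ : ∀ j ∈ Finset.Icc 1 d, δ j = 0 ∨ δ j = 1)
    (hβ : ∀ j, β j = if δ j = 1 then α j else 1 - α j)
    (hlam : ∀ j, lam j = (1 - ε j) * α j + ε j * δ j)
    (hν : ∀ j, ν j = (1 - ε j) * α j + ε j * (1 - δ j))
    (hmono : ∀ j j', 1 ≤ j → j ≤ j' → j' ≤ d → β j ≤ β j')
    (x : ℕ → ℕ) (hx : ∀ j ∈ Finset.Icc 1 d, x j ≤ 1)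
    (βe : ℕ → ℝ)
    (hβe : ∀ j, βe j = if j = 0 then 0 else if j = d + 1 then 1 else β j)
    (f : ℕ → ℝ)
    (hf : ∀ j₀, f j₀ =
      (∏ j ∈ Finset.Icc 1 j₀, (ν j) ^ (x j) * (1 - ν j) ^ (1 - x j)) *
      (∏ j ∈ Finset.Icc (j₀ + 1) d, (lam j) ^ (x j) * (1 - lam j) ^ (1 - x j))) :
    (∫ u in (0:ℝ)..1, ∏ j ∈ Finset.Icc 1 d,
        ((if u < β j then lam j else ν j) ^ (x j) *
          (1 - (if u < β j then lam j else ν j)) ^ (1 - x j)))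
      = ∑ j ∈ Finset.range (d + 1), (βe (j + 1) - βe j) * f j := by
  set g : ℝ → ℝ := fun u => ∏ j ∈ Finset.Icc 1 d,
        ((if u < β j then lam j else ν j) ^ (x j) *
          (1 - (if u < β j then lam j else ν j)) ^ (1 - x j)) with hg
  -- β j ∈ (0,1) for j ∈ [1,d]
  have hβmem : ∀ j, 1 ≤ j → j ≤ d → β j ∈ Set.Ioo (0:ℝ) 1 := by
    intro j h1 h2
    have hαj := hα j (Finset.mem_Icc.2 ⟨h1, h2⟩)
    rw [hβ j]
    split
    · exact hαj
    · exact ⟨by linarith [hαj.2], by linarith [hαj.1]⟩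
  -- βe values on the middle range
  have hβe_mid : ∀ j, 1 ≤ j → j ≤ d → βe j = β j := by
    intro j h1 h2
    rw [hβe j, if_neg (by omega), if_neg (by omega)]
  have hβe0 : βe 0 = 0 := by rw [hβe 0]; simp
  have hβe1 : βe (d + 1) = 1 := by rw [hβe (d+1)]; simp
  -- monotonicity of βe
  have hβe_mono : ∀ i, i ≤ d → βe i ≤ βe (i + 1) := by
    intro i hi
    rcases Nat.eq_zero_or_pos i with h0 | h1
    · subst h0
      rw [hβe0, hβe_mid 1 le_rfl hd]
      exact le_of_lt (hβmem 1 le_rfl hd).1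
    · rcases Nat.lt_or_ge i d with hlt | hge
      · rw [hβe_mid i h1 hi, hβe_mid (i+1) (by omega) (by omega)]
        exact hmono i (i+1) h1 (by omega) (by omega)
      · have : i = d := le_antisymm hi hge
        subst this
        rw [hβe_mid i h1 le_rfl, hβe1]
        exact le_of_lt (hβmem i h1 le_rfl).2
  -- on each piece the integrand is constant = f i
  have hconst : ∀ i, i ≤ d → ∀ u ∈ Set.Ioo (βe i) (βe (i+1)), g u = f i := by
    intro i hi u hu
    simp only [hg, hf i]
    have hsplit : Finset.Icc 1 d = Finset.Ioc 0 d := by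
      rw [← Finset.Icc_add_one_left_eq_Ioc]; rfl
    have hsplit1 : Finset.Icc 1 i = Finset.Ioc 0 i := by
      rw [← Finset.Icc_add_one_left_eq_Ioc]; rfl
    have hsplit2 : Finset.Icc (i+1) d = Finset.Ioc i d := by
      rw [← Finset.Icc_add_one_left_eq_Ioc]
    rw [hsplit, hsplit1, hsplit2,
      ← Finset.prod_Ioc_consecutive _ (Nat.zero_le i) hi]
    congr 1
    · apply Finset.prod_congr rfl
      intro j hj
      rw [Finset.mem_Ioc] at hj
      have hβj : β j ≤ βe i := by
        rw [hβe_mid i (by omega) hi]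
        exact hmono j i hj.1 hj.2 hi
      have : ¬ (u < β j) := not_lt.2 (le_of_lt (lt_of_le_of_lt hβj hu.1))
      rw [if_neg this]
    · apply Finset.prod_congr rfl
      intro j hj
      rw [Finset.mem_Ioc] at hj
      have hβj : βe (i+1) ≤ β j := by
        rw [hβe_mid (i+1) (by omega) (by omega)]
        exact hmono (i+1) j (by omega) (by omega) hj.2
      rw [if_pos (lt_of_lt_of_le hu.2 hβj)]
  have hpieces : ∀ i, i ≤ d →
      IntervalIntegrable g volume (βe i) (βe (i+1)) ∧
      ∫ u in (βe i)..(βe (i+1)), g u = (βe (i+1) - βe i) * f i := by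
    intro i hi
    exact step_piece (hβe_mono i hi) g (hconst i hi)
  have hsum := intervalIntegral.sum_integral_adjacent_intervals
      (a := βe) (n := d + 1) (f := g) (fun i hi => (hpieces i (by omega)).1)
  rw [hβe0, hβe1] at hsum
  rw [show (∫ u in (0:ℝ)..1, ∏ j ∈ Finset.Icc 1 d,
        ((if u < β j then lam j else ν j) ^ (x j) *
          (1 - (if u < β j then lam j else ν j)) ^ (1 - x j))) = ∫ u in (0:ℝ)..1, g u from rfl,
    ← hsum]
  apply Finset.sum_congr rfl
  intro i hi
  rw [Finset.mem_range] at hi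
  rw [(hpieces i (by omega)).2]
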